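/- Let m ≥ 2 and n ≥ 1, and let f : E^m → E^n be a function. If 0 is a limit point of the set P_f of distances preserved by f (i.e. for every ε > 0 there exists r ∈ P_f with 0 < r < ε), then f is differentiable at every point and its Fréchet derivative at every point is a linear isometric embedding, i.e. ‖(Df_x)(v)‖ = ‖v‖ for every x ∈ E^m and v ∈ ℝ^m. (This is the Euclidean-space instance of the Immersion Theorem.) -/

import Mathlib

open RealInnerProductSpace

theorem exists_unit_orth (m : ℕ) (hm : 2 ≤ m) (u : EuclideanSpace ℝ (Fin m)) :
    ∃ w : EuclideanSpace ℝ (Fin m), ‖w‖ = 1 ∧ ⟪u, w⟫ = 0 := by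
  have hne : (ℝ ∙ u)ᗮ ≠ ⊥ := by
    rw [Ne, Submodule.orthogonal_eq_bot_iff]
    intro h
    have h1 : Module.finrank ℝ (ℝ ∙ u) ≤ 1 := by
      have := finrank_span_le_card (R := ℝ) ({u} : Set (EuclideanSpace ℝ (Fin m)))
      simpa using this
    rw [h] at h1
    have h2 : Module.finrank ℝ (⊤ : Submodule ℝ (EuclideanSpace ℝ (Fin m))) = m := by
      simp [finrank_euclideanSpace_fin]
    omega
  obtain ⟨w, hw, hwne⟩ := Submodule.exists_mem_ne_zero_of_ne_bot hne
  refine ⟨‖w‖⁻¹ • w, ?_, ?_⟩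
  · simp [norm_smul, norm_ne_zero_iff.mpr hwne]
  · have := (Submodule.mem_orthogonal (ℝ ∙ u) w).mp hw u (Submodule.mem_span_singleton_self u)
    rw [real_inner_smul_right, this, mul_zero]

theorem sphere_int (m : ℕ) (hm : 2 ≤ m) (r : ℝ) (hr : 0 < r)
    (a b : EuclideanSpace ℝ (Fin m)) (hab : dist a b ≤ 2 * r) :
    ∃ c, dist a c = r ∧ dist b c = r := by
  obtain ⟨w, hw1, hw0⟩ := exists_unit_orth m hm (b - a)
  set d : ℝ := dist a b with hd
  have hd0 : 0 ≤ d := dist_nonneg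
  have hdn : ‖b - a‖ = d := by rw [hd, dist_comm, dist_eq_norm]
  set h : ℝ := Real.sqrt (r ^ 2 - (d / 2) ^ 2) with hh
  have hh2 : h ^ 2 = r ^ 2 - (d / 2) ^ 2 := by
    rw [hh, Real.sq_sqrt]; nlinarith
  have hhn : 0 ≤ h := Real.sqrt_nonneg _
  refine ⟨a + ((1 / 2 : ℝ) • (b - a) + h • w), ?_, ?_⟩
  · have e1 : dist a (a + ((1 / 2 : ℝ) • (b - a) + h • w)) = ‖(1 / 2 : ℝ) • (b - a) + h • w‖ := by
      rw [dist_eq_norm]; rw [← norm_neg]; congr 1; module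
    rw [e1]
    have hsq : ‖(1 / 2 : ℝ) • (b - a) + h • w‖ ^ 2 = r ^ 2 := by
      rw [norm_add_sq_real, real_inner_smul_left, real_inner_smul_right, hw0,
        norm_smul, norm_smul, hdn, hw1]
      simp only [mul_zero, Real.norm_ofNat, Real.norm_eq_abs, mul_one]
      rw [abs_of_nonneg hhn]
      rw [abs_of_nonneg (by norm_num : (0:ℝ) ≤ 1/2)]
      nlinarith
    rw [← Real.sqrt_sq (norm_nonneg _), hsq, Real.sqrt_sq hr.le]
  · have e1 : dist b (a + ((1 / 2 : ℝ) • (b - a) + h • w)) = ‖(1 / 2 : ℝ) • (b - a) - h • w‖ := by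
      rw [dist_eq_norm]; congr 1; module
    rw [e1]
    have hsq : ‖(1 / 2 : ℝ) • (b - a) - h • w‖ ^ 2 = r ^ 2 := by
      rw [norm_sub_sq_real, real_inner_smul_left, real_inner_smul_right, hw0,
        norm_smul, norm_smul, hdn, hw1]
      simp only [mul_zero, Real.norm_ofNat, Real.norm_eq_abs, mul_one]
      rw [abs_of_nonneg hhn]
      rw [abs_of_nonneg (by norm_num : (0:ℝ) ≤ 1/2)]
      nlinarith
    rw [← Real.sqrt_sq (norm_nonneg _), hsq, Real.sqrt_sq hr.le]

theorem ray_pt {m : ℕ} (x y : EuclideanSpace ℝ (Fin m)) (t : ℝ) (ht : 0 ≤ t) (h : x ≠ y) :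
    dist x (x + (t / dist x y) • (y - x)) = t ∧
      dist y (x + (t / dist x y) • (y - x)) = |dist x y - t| := by
  have hs : 0 < dist x y := dist_pos.mpr h
  have hyx : ‖y - x‖ = dist x y := by rw [dist_comm, dist_eq_norm]
  constructor
  · rw [dist_eq_norm]
    have e : x - (x + (t / dist x y) • (y - x)) = (-(t / dist x y)) • (y - x) := by module
    rw [e, norm_smul, hyx, Real.norm_eq_abs, abs_neg, abs_div, abs_of_nonneg ht,
      abs_of_pos hs]
    field_simp
  · rw [dist_eq_norm]
    have e : y - (x + (t / dist x y) • (y - x)) = ((dist x y - t) / dist x y) • (y - x) := by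
      have : (1 : ℝ) - t / dist x y = (dist x y - t) / dist x y := by field_simp
      rw [← this]; module
    rw [e, norm_smul, hyx, Real.norm_eq_abs, abs_div, abs_of_pos hs]
    field_simp

theorem f_lip (m n : ℕ) (hm : 2 ≤ m)
    (f : EuclideanSpace ℝ (Fin m) → EuclideanSpace ℝ (Fin n))
    (hlim : ∀ ε > 0, ∃ r, 0 < r ∧ r < ε ∧
      ∀ x y, dist x y = r → dist (f x) (f y) = r) :
    ∀ x y, dist (f x) (f y) ≤ dist x y := by
  have main : ∀ ε > 0, ∀ x y, dist (f x) (f y) ≤ dist x y + ε := by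
    intro ε hε x y
    obtain ⟨r, hr0, hrε, hpr⟩ := hlim (ε / 3) (by positivity)
    have key : ∀ k : ℕ, ∀ a b, dist a b ≤ (k + 2) * r → dist (f a) (f b) ≤ (k + 2) * r := by
      intro k
      induction k with
      | zero =>
        intro a b hab
        obtain ⟨c, hac, hbc⟩ := sphere_int m hm r hr0 a b (by push_cast at hab; linarith)
        have h1 := hpr a c hac
        have h2 := hpr b c hbc
        have h3 := dist_triangle (f a) (f c) (f b)
        rw [dist_comm (f c) (f b)] at h3
        push_cast
        linarith
      | succ k ih =>
        intro a b hab
        by_cases hk : dist a b ≤ (k + 2) * r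
        · refine (ih a b hk).trans ?_
          push_cast
          nlinarith
        push_neg at hk
        have hane : a ≠ b := by
          intro hcon
          rw [hcon, dist_self] at hk
          nlinarith
        have hts : 0 ≤ dist a b - r := by nlinarith
        obtain ⟨h1, h2⟩ := ray_pt a b (dist a b - r) hts hane
        set c := a + ((dist a b - r) / dist a b) • (b - a) with hc
        have hbc : dist c b = r := by
          rw [dist_comm, h2, abs_of_nonneg (by linarith)]
          ring
        have hfcb := hpr c b hbc
        have hfac : dist (f a) (f c) ≤ (k + 2) * r := by
          refine ih a c ?_
          rw [h1]
          push_cast at hab ⊢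
          linarith
        have h3 := dist_triangle (f a) (f c) (f b)
        push_cast
        push_cast at hfac
        linarith
    set s := dist x y with hsdef
    have hs0 : 0 ≤ s := dist_nonneg
    set k : ℕ := ⌈s / r⌉₊ with hkdef
    have hk1 : s ≤ (k : ℝ) * r := by
      have := Nat.le_ceil (s / r)
      calc s = s / r * r := by field_simp
      _ ≤ (k : ℝ) * r := by
        apply mul_le_mul_of_nonneg_right _ hr0.le
        exact this
    have hk2 : (k : ℝ) < s / r + 1 := Nat.ceil_lt_add_one (by positivity)
    have hk3 : (k : ℝ) * r < s + r := by
      have := mul_lt_mul_of_pos_right hk2 hr0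
      rw [add_mul, div_mul_cancel₀ _ hr0.ne', one_mul] at this
      exact this
    have := key k x y (by push_cast; nlinarith)
    push_cast at this
    nlinarith
  intro x y
  by_contra hcon
  push_neg at hcon
  have := main ((dist (f x) (f y) - dist x y) / 2) (by linarith) x y
  linarith

theorem small_pres (m n : ℕ)
    (f : EuclideanSpace ℝ (Fin m) → EuclideanSpace ℝ (Fin n)) (r : ℝ) (hr0 : 0 < r)
    (hpr : ∀ x y, dist x y = r → dist (f x) (f y) = r)
    (hlip : ∀ x y, dist (f x) (f y) ≤ dist x y) :
    ∀ x y, dist x y ≤ r → dist (f x) (f y) = dist x y := by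
  intro x y hxy
  rcases eq_or_ne x y with rfl | hne
  · simp
  have hs : 0 < dist x y := dist_pos.mpr hne
  obtain ⟨h1, h2⟩ := ray_pt x y r hr0.le hne
  set z := x + (r / dist x y) • (y - x) with hz
  have hyz : dist y z = r - dist x y := by
    rw [h2, abs_of_nonpos (by linarith)]; ring
  have hfz : dist (f x) (f z) = r := hpr x z h1
  have t1 := dist_triangle (f x) (f y) (f z)
  have t2 : dist (f y) (f z) ≤ r - dist x y := (hlip y z).trans_eq hyz
  have t3 := hlip x y
  have t4 := dist_triangle (f x) (f z) (f y)
  linarith [dist_nonneg (x := f z) (y := f y), dist_comm (f y) (f z) ▸ t2,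
    abs_nonneg (dist x y - r)]

theorem f_pres (m n : ℕ)
    (f : EuclideanSpace ℝ (Fin m) → EuclideanSpace ℝ (Fin n)) (r : ℝ) (hr0 : 0 < r)
    (hsmall : ∀ x y, dist x y ≤ r → dist (f x) (f y) = dist x y)
    (hlip : ∀ x y, dist (f x) (f y) ≤ dist x y) :
    ∀ x y, dist (f x) (f y) = dist x y := by
  intro x y
  rcases eq_or_ne x y with rfl | hne
  · simp
  set s := dist x y with hsdef
  have hs : 0 < s := dist_pos.mpr hne
  set u : EuclideanSpace ℝ (Fin m) := ((r / 2) / s) • (y - x) with hu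
  have hyx : ‖y - x‖ = s := by rw [hsdef, dist_comm, dist_eq_norm]
  have hun : ‖u‖ = r / 2 := by
    rw [hu, norm_smul, hyx, Real.norm_eq_abs, abs_div, abs_of_nonneg (by positivity),
      abs_of_pos hs]
    field_simp
  set p : ℕ → EuclideanSpace ℝ (Fin m) := fun i => x + (i : ℝ) • u with hp
  have hdist : ∀ i j : ℕ, dist (p i) (p j) = |(i : ℝ) - (j : ℝ)| * (r / 2) := by
    intro i j
    rw [dist_eq_norm]
    have e : p i - p j = ((i : ℝ) - (j : ℝ)) • u := by rw [hp]; simp only; module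
    rw [e, norm_smul, hun, Real.norm_eq_abs]
  have hstep : ∀ i : ℕ, dist (f (p i)) (f (p (i + 1))) = r / 2 := by
    intro i
    have hd : dist (p i) (p (i + 1)) = r / 2 := by
      rw [hdist]; push_cast; rw [show (i:ℝ) - (i + 1) = -1 by ring]; simp
    rw [hsmall _ _ (by rw [hd]; linarith), hd]
  have hskip : ∀ i : ℕ, dist (f (p i)) (f (p (i + 2))) = r := by
    intro i
    have hd : dist (p i) (p (i + 2)) = r := by
      rw [hdist]; push_cast; rw [show (i:ℝ) - (i + 2) = -2 by ring]
      rw [abs_neg]; norm_num; ring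
    rw [hsmall _ _ (by rw [hd]), hd]
  have hmid : ∀ i : ℕ, f (p (i + 1)) = midpoint ℝ (f (p i)) (f (p (i + 2))) := by
    intro i
    apply eq_midpoint_of_dist_eq_half
    · rw [hstep i, hskip i]
    · rw [hskip i]
      have := hstep (i + 1)
      rw [show i + 1 + 1 = i + 2 from rfl] at this
      rw [this]
  have hdiff : ∀ i : ℕ, f (p (i + 1)) - f (p i) = f (p 1) - f (p 0) := by
    intro i
    induction i with
    | zero => rfl
    | succ j ih =>
      have hb := hmid j
      rw [midpoint_eq_smul_add] at hb
      have : f (p (j + 2)) - f (p (j + 1)) = f (p (j + 1)) - f (p j) := by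
        rw [invOf_eq_inv] at hb
        rw [hb]; module
      rw [show j + 1 + 1 = j + 2 from rfl, this, ih]
  have htele : ∀ i : ℕ, f (p i) - f (p 0) = (i : ℝ) • (f (p 1) - f (p 0)) := by
    intro i
    induction i with
    | zero => simp
    | succ j ih =>
      have : f (p (j + 1)) - f (p 0) = (f (p (j + 1)) - f (p j)) + (f (p j) - f (p 0)) := by
        abel
      rw [this, hdiff j, ih]
      push_cast
      module
  set k : ℕ := ⌈s / (r / 2)⌉₊ with hkdef
  have hk1 : s ≤ (k : ℝ) * (r / 2) := by
    have h1 := Nat.le_ceil (s / (r / 2))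
    calc s = s / (r / 2) * (r / 2) := by field_simp
    _ ≤ (k : ℝ) * (r / 2) := mul_le_mul_of_nonneg_right h1 (by positivity)
  set t : ℝ := (k : ℝ) * (r / 2) with htdef
  have hqk : dist (f (p 0)) (f (p k)) = t := by
    rw [dist_eq_norm, ← norm_neg]
    have e : -(f (p 0) - f (p k)) = f (p k) - f (p 0) := by abel
    rw [e, htele k, norm_smul, Real.norm_natCast]
    have h01 : ‖f (p 1) - f (p 0)‖ = r / 2 := by
      rw [← dist_eq_norm, dist_comm, hstep 0]
    rw [h01]
  have hpk : p k = x + (t / dist x y) • (y - x) := by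
    rw [hp]; simp only
    congr 1
    rw [hu, smul_smul, htdef, ← hsdef]
    congr 1
    field_simp
  obtain ⟨hr1, hr2⟩ := ray_pt x y t (by positivity) hne
  rw [← hpk] at hr1 hr2
  have hypk : dist y (p k) = t - s := by
    rw [hr2, ← hsdef, abs_of_nonpos (by linarith)]; ring
  have hp0 : p 0 = x := by rw [hp]; simp
  have t1 := dist_triangle (f x) (f y) (f (p k))
  have t2 : dist (f y) (f (p k)) ≤ t - s := (hlip y (p k)).trans_eq hypk
  have t3 := hlip x y
  rw [hp0] at hqk
  linarith
theorem stmt_2 (m n : ℕ) (hm : 2 ≤ m) (hn : 1 ≤ n)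
    (f : EuclideanSpace ℝ (Fin m) → EuclideanSpace ℝ (Fin n))
    (hlim : ∀ ε > 0, ∃ r, 0 < r ∧ r < ε ∧
      ∀ x y, dist x y = r → dist (f x) (f y) = r) :
    ∀ x, DifferentiableAt ℝ f x ∧ ∀ v, ‖fderiv ℝ f x v‖ = ‖v‖ := by
  have hlip := f_lip m n hm f hlim
  obtain ⟨r, hr0, -, hpr⟩ := hlim 1 one_pos
  have hsmall := small_pres m n f r hr0 hpr hlip
  have hiso : Isometry f := Isometry.of_dist_eq (f_pres m n f r hr0 hsmall hlip)
  set A := hiso.affineIsometryOfStrictConvexSpace with hA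
  have hAf : ⇑A = f := hiso.coe_affineIsometryOfStrictConvexSpace
  set L := A.linearIsometry with hL
  set Lc : EuclideanSpace ℝ (Fin m) →L[ℝ] EuclideanSpace ℝ (Fin n) :=
    L.toContinuousLinearMap with hLc
  intro x
  have hf : f = fun y => Lc y + (f x - Lc x) := by
    funext y
    have h1 := A.map_vadd x (y - x)
    rw [hAf] at h1
    have h2 : (y - x) +ᵥ x = y := by rw [vadd_eq_add, sub_add_cancel]
    rw [h2] at h1
    have h3 : Lc y - Lc x = L (y - x) := by
      rw [← map_sub]; rfl
    rw [h1]
    have : L (y - x) +ᵥ f x = L (y - x) + f x := rfl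
    rw [this, ← h3]
    abel
  have hd : HasFDerivAt f Lc x := by
    rw [hf]
    exact Lc.hasFDerivAt.add_const _
  refine ⟨hd.differentiableAt, fun v => ?_⟩
  rw [hd.fderiv]
  exact L.norm_map v
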